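/- The degree-5 homogeneous components of the P4 vector field are P₅(x,y) = x(x² + y²)² and Q₅(x,y) = y(x² + y²)²; that is, P(x,y) − x(x² + y²)² and Q(x,y) − y(x² + y²)² are polynomials of total degree at most 3. Consequently X·Q₅(X,Y) − Y·P₅(X,Y) = 0 for all (X, Y) ∈ ℝ², so Poincaré's criterion for critical points at infinity is satisfied identically: contrary to Poincaré's claim of a limit cycle at infinity, every point of the equator of the Poincaré sphere is a critical point for P4. -/

import Mathlib

open MvPolynomial in
lemma mon_deg3 (a : ℝ) (i j : ℕ) (h : i + j ≤ 3) :
    ((C a : MvPolynomial (Fin 2) ℝ) * X 0 ^ i * X 1 ^ j).totalDegree ≤ 3 := by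
  refine le_trans (totalDegree_mul _ _) ?_
  refine le_trans (add_le_add (totalDegree_mul _ _) le_rfl) ?_
  simpa [totalDegree_C, totalDegree_X_pow] using h

set_option maxHeartbeats 2000000

/-- The degree-5 homogeneous components of P4 are `P₅ = x(x²+y²)²` and `Q₅ = y(x²+y²)²`
(the differences have total degree ≤ 3), and `X·Q₅ − Y·P₅` vanishes identically, so
every point of the equator of the Poincaré sphere is a critical point of P4. -/
theorem stmt5 (X Y P Q : MvPolynomial (Fin 2) ℝ)
    (hX : X = MvPolynomial.X 0) (hY : Y = MvPolynomial.X 1)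
    (hP : P = X * (X^2 + Y^2 - 1) * (X^2 + Y^2 - 9) - Y * (X^2 + Y^2 - 2*X - 8))
    (hQ : Q = Y * (X^2 + Y^2 - 1) * (X^2 + Y^2 - 9) + X * (X^2 + Y^2 - 2*X - 8))
    (P₅ Q₅ : ℝ → ℝ → ℝ)
    (hP₅ : ∀ x y : ℝ, P₅ x y = x * (x^2 + y^2)^2)
    (hQ₅ : ∀ x y : ℝ, Q₅ x y = y * (x^2 + y^2)^2) :
    (P - X * (X^2 + Y^2)^2).totalDegree ≤ 3 ∧
    (Q - Y * (X^2 + Y^2)^2).totalDegree ≤ 3 ∧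
    (∀ x y : ℝ, x * Q₅ x y - y * P₅ x y = 0) := by
  subst hP hQ hX hY
  open MvPolynomial in
  refine ⟨?_, ?_, ?_⟩
  · have h : (MvPolynomial.X 0 * (MvPolynomial.X 0^2 + MvPolynomial.X 1^2 - 1) *
        (MvPolynomial.X 0^2 + MvPolynomial.X 1^2 - 9)
        - MvPolynomial.X 1 * (MvPolynomial.X 0^2 + MvPolynomial.X 1^2 - 2*MvPolynomial.X 0 - 8)
        : MvPolynomial (Fin 2) ℝ)
        - MvPolynomial.X 0 * (MvPolynomial.X 0^2 + MvPolynomial.X 1^2)^2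
        = C (-10) * MvPolynomial.X 0 ^ 3 * MvPolynomial.X 1 ^ 0
        + C (-10) * MvPolynomial.X 0 ^ 1 * MvPolynomial.X 1 ^ 2
        + C 9 * MvPolynomial.X 0 ^ 1 * MvPolynomial.X 1 ^ 0
        + C (-1) * MvPolynomial.X 0 ^ 2 * MvPolynomial.X 1 ^ 1
        + C (-1) * MvPolynomial.X 0 ^ 0 * MvPolynomial.X 1 ^ 3
        + C 2 * MvPolynomial.X 0 ^ 1 * MvPolynomial.X 1 ^ 1
        + C 8 * MvPolynomial.X 0 ^ 0 * MvPolynomial.X 1 ^ 1 := by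
      simp only [map_neg, map_ofNat, map_one]
      ring
    rw [h]
    repeat refine le_trans (totalDegree_add _ _) (max_le ?_ ?_)
    all_goals exact mon_deg3 _ _ _ (by norm_num)
  · have h : (MvPolynomial.X 1 * (MvPolynomial.X 0^2 + MvPolynomial.X 1^2 - 1) *
        (MvPolynomial.X 0^2 + MvPolynomial.X 1^2 - 9)
        + MvPolynomial.X 0 * (MvPolynomial.X 0^2 + MvPolynomial.X 1^2 - 2*MvPolynomial.X 0 - 8)
        : MvPolynomial (Fin 2) ℝ)
        - MvPolynomial.X 1 * (MvPolynomial.X 0^2 + MvPolynomial.X 1^2)^2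
        = C (-10) * MvPolynomial.X 0 ^ 2 * MvPolynomial.X 1 ^ 1
        + C (-10) * MvPolynomial.X 0 ^ 0 * MvPolynomial.X 1 ^ 3
        + C 9 * MvPolynomial.X 0 ^ 0 * MvPolynomial.X 1 ^ 1
        + C 1 * MvPolynomial.X 0 ^ 3 * MvPolynomial.X 1 ^ 0
        + C 1 * MvPolynomial.X 0 ^ 1 * MvPolynomial.X 1 ^ 2
        + C (-2) * MvPolynomial.X 0 ^ 2 * MvPolynomial.X 1 ^ 0
        + C (-8) * MvPolynomial.X 0 ^ 1 * MvPolynomial.X 1 ^ 0 := by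
      simp only [map_neg, map_ofNat, map_one]
      ring
    rw [h]
    repeat refine le_trans (totalDegree_add _ _) (max_le ?_ ?_)
    all_goals exact mon_deg3 _ _ _ (by norm_num)
  · intro x y
    rw [hP₅, hQ₅]
    ring
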